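/- Let (A,b) ∈ M_n(ℝ) × ℝⁿ be a controllable pair. Then lim_{T→+∞} ρ(A,T) exists and equals sup_{T>0} ρ(A,T), and lim_{T→0⁺} ρ(A,T) exists and equals inf_{T>0} ρ(A,T). -/

import Mathlib

open MeasureTheory Filter Matrix

noncomputable section

/-- A `(T,μ)`-signal: a measurable function with values in `[0,1]` whose integral over any
window `[t, t+T]` with `t ≥ 0` is at least `μ`. -/
def IsPESignal (T μ : ℝ) (α : ℝ → ℝ) : Prop :=
  Measurable α ∧ (∀ t, α t ∈ Set.Icc (0:ℝ) 1) ∧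
    ∀ t : ℝ, 0 ≤ t → μ ≤ ∫ s in t..(t + T), α s

/-- `x` is the solution of `ẋ = (A - α(t) b Kᵀ) x`, `x(t₀) = x₀`, in integral (Carathéodory)
form. -/
def IsLinSol {n : ℕ} (A : Matrix (Fin n) (Fin n) ℝ) (b K : Fin n → ℝ)
    (α : ℝ → ℝ) (t₀ : ℝ) (x₀ : Fin n → ℝ) (x : ℝ → Fin n → ℝ) : Prop :=
  x t₀ = x₀ ∧ ∀ t : ℝ, t₀ ≤ t →
    x t = x₀ + ∫ s in t₀..t, (A - α s • vecMulVec b K).mulVec (x s)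

/-- `K` is a `(T,μ)`-stabilizer for the pair `(A,b)`. -/
def IsStabilizer {n : ℕ} (T μ : ℝ) (A : Matrix (Fin n) (Fin n) ℝ) (b K : Fin n → ℝ) : Prop :=
  ∃ C > (0:ℝ), ∃ γ > (0:ℝ), ∀ α : ℝ → ℝ, IsPESignal T μ α →
    ∀ t₀ : ℝ, 0 ≤ t₀ → ∀ x₀ : Fin n → ℝ, ∀ x : ℝ → Fin n → ℝ,
      IsLinSol A b K α t₀ x₀ x →
      ∀ t : ℝ, t₀ ≤ t → ‖x t‖ ≤ C * Real.exp (-γ * (t - t₀)) * ‖x₀‖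

/-- Maximal Lyapunov exponent `λ⁺(α, K)`. -/
def lamPlus {n : ℕ} (A : Matrix (Fin n) (Fin n) ℝ) (b K : Fin n → ℝ) (α : ℝ → ℝ) : EReal :=
  ⨆ (x₀ : Fin n → ℝ) (_ : ‖x₀‖ = 1) (x : ℝ → Fin n → ℝ) (_ : IsLinSol A b K α 0 x₀ x),
    Filter.limsup (fun t : ℝ => ((Real.log ‖x t‖ / t : ℝ) : EReal)) Filter.atTop

/-- Rate of convergence `rc(A, b, T, μ, K)`. -/
def rateC {n : ℕ} (A : Matrix (Fin n) (Fin n) ℝ) (b : Fin n → ℝ) (T μ : ℝ)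
    (K : Fin n → ℝ) : EReal :=
  - ⨆ (α : ℝ → ℝ) (_ : IsPESignal T μ α), lamPlus A b K α

/-- Maximal rate of convergence `RC(A, T, μ)` (with respect to the pair `(A, b)`). -/
def RCmax {n : ℕ} (A : Matrix (Fin n) (Fin n) ℝ) (b : Fin n → ℝ) (T μ : ℝ) : EReal :=
  ⨆ K : Fin n → ℝ, rateC A b T μ K

/-- The pair `(A,b)` is controllable: the Kalman matrix `(b | Ab | ... | A^{n-1}b)` has
rank `n`. -/
def IsControllable {n : ℕ} (A : Matrix (Fin n) (Fin n) ℝ) (b : Fin n → ℝ) : Prop :=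
  (Matrix.of fun i j : Fin n => (A ^ (j : ℕ)).mulVec b i).rank = n

/-- `ρ(A,T) = inf { ρ ∈ (0,1] : RC(A, T, Tρ) = +∞ }`. -/
def rhoCrit {n : ℕ} (A : Matrix (Fin n) (Fin n) ℝ) (b : Fin n → ℝ) (T : ℝ) : ℝ :=
  sInf {ρ : ℝ | ρ ∈ Set.Ioc (0:ℝ) 1 ∧ RCmax A b T (T * ρ) = ⊤}

-- Part I: soft lemmas about signal classes and RCmax monotonicity

lemma PE.intervalIntegrable {α : ℝ → ℝ} (hm : Measurable α)
    (hb : ∀ t, α t ∈ Set.Icc (0:ℝ) 1) (a c : ℝ) :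
    IntervalIntegrable α MeasureTheory.volume a c := by
  rw [intervalIntegrable_iff]
  apply MeasureTheory.Measure.integrableOn_of_bounded (M := 1) measure_Ioc_lt_top.ne
    hm.aestronglyMeasurable
  · filter_upwards with t
    rw [Real.norm_eq_abs, abs_le]
    exact ⟨le_trans (by norm_num) (hb t).1, (hb t).2⟩

lemma pe_mono_mu {T μ μ' : ℝ} {α : ℝ → ℝ} (h : μ' ≤ μ) (hα : IsPESignal T μ α) :
    IsPESignal T μ' α :=
  ⟨hα.1, hα.2.1, fun t ht => le_trans h (hα.2.2 t ht)⟩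

lemma pe_mono_T {T T' μ : ℝ} {α : ℝ → ℝ} (h : T ≤ T') (hα : IsPESignal T μ α) :
    IsPESignal T' μ α := by
  refine ⟨hα.1, hα.2.1, fun t ht => ?_⟩
  have h1 : (∫ s in t..(t + T), α s) ≤ ∫ s in t..(t + T'), α s := by
    have := intervalIntegral.integral_add_adjacent_intervals
      (PE.intervalIntegrable hα.1 hα.2.1 t (t + T))
      (PE.intervalIntegrable hα.1 hα.2.1 (t + T) (t + T'))
    rw [← this]
    have h2 : (0:ℝ) ≤ ∫ s in (t + T)..(t + T'), α s := by
      apply intervalIntegral.integral_nonneg (by linarith)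
      exact fun u _ => (hα.2.1 u).1
    linarith
  exact le_trans (hα.2.2 t ht) h1

lemma pe_split {T μ : ℝ} (hT : 0 ≤ T) {α : ℝ → ℝ} (hα : IsPESignal T μ α) (k : ℕ) :
    IsPESignal (k * T) (k * μ) α := by
  refine ⟨hα.1, hα.2.1, fun t ht => ?_⟩
  induction k with
  | zero => simp
  | succ k ih =>
    have hsplit := intervalIntegral.integral_add_adjacent_intervals
      (PE.intervalIntegrable hα.1 hα.2.1 t (t + k * T))
      (PE.intervalIntegrable hα.1 hα.2.1 (t + k * T) (t + (k+1) * T))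
    have h2 : μ ≤ ∫ s in (t + k * T)..(t + (k+1) * T), α s := by
      have h3 := hα.2.2 (t + k * T) (by positivity)
      have : t + k * T + T = t + (k+1) * T := by ring
      rwa [this] at h3
    push_cast
    push_cast at ih
    rw [← hsplit] at *
    linarith

lemma rcmax_mono_of_imp {n : ℕ} (A : Matrix (Fin n) (Fin n) ℝ) (b : Fin n → ℝ)
    {T μ T' μ' : ℝ}
    (h : ∀ α : ℝ → ℝ, IsPESignal T' μ' α → IsPESignal T μ α) :
    RCmax A b T μ ≤ RCmax A b T' μ' := by
  apply iSup_mono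
  intro K
  rw [rateC, rateC, EReal.neg_le_neg_iff]
  apply iSup_mono
  intro α
  exact iSup_le fun hα => le_iSup_of_le (h α hα) le_rfl

lemma rcmax_mono_mu {n : ℕ} (A : Matrix (Fin n) (Fin n) ℝ) (b : Fin n → ℝ)
    {T μ μ' : ℝ} (h : μ ≤ μ') : RCmax A b T μ ≤ RCmax A b T μ' :=
  rcmax_mono_of_imp A b fun α hα => pe_mono_mu h hα

lemma rcmax_window {n : ℕ} (A : Matrix (Fin n) (Fin n) ℝ) (b : Fin n → ℝ)
    {T T' μ : ℝ} (h : T' ≤ T) : RCmax A b T μ ≤ RCmax A b T' μ :=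
  rcmax_mono_of_imp A b fun α hα => pe_mono_T h hα

lemma rcmax_split {n : ℕ} (A : Matrix (Fin n) (Fin n) ℝ) (b : Fin n → ℝ)
    {T μ : ℝ} (hT : 0 ≤ T) (k : ℕ) :
    RCmax A b (k * T) (k * μ) ≤ RCmax A b T μ :=
  rcmax_mono_of_imp A b fun α hα => pe_split hT hα k

-- II.a : a (T,T)-signal is a.e. equal to 1 on [0, ∞)

lemma pe_TT_ae_one {T : ℝ} (hT : 0 < T) {α : ℝ → ℝ} (hα : IsPESignal T T α) :
    ∀ᵐ s : ℝ, 0 ≤ s → α s = 1 := by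
  have hj : ∀ j : ℕ, ∀ᵐ s : ℝ, s ∈ Set.Ioc ((j:ℝ) * T) ((j:ℝ) * T + T) → α s = 1 := by
    intro j
    set t : ℝ := (j:ℝ) * T with ht
    have ht0 : 0 ≤ t := by positivity
    have hint : IntegrableOn (fun s => 1 - α s) (Set.Ioc t (t + T)) := by
      have h1 : IntervalIntegrable (fun s => 1 - α s) volume t (t + T) :=
        (intervalIntegrable_const (c := (1:ℝ))).sub (PE.intervalIntegrable hα.1 hα.2.1 _ _)
      rw [intervalIntegrable_iff_integrableOn_Ioc_of_le (by linarith)] at h1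
      exact h1
    have hnn : 0 ≤ᵐ[volume.restrict (Set.Ioc t (t + T))] fun s => 1 - α s := by
      filter_upwards with s
      have := (hα.2.1 s).2; simp; linarith
    have hzero : (∫ s in Set.Ioc t (t + T), (1 - α s)) = 0 := by
      have hle := hα.2.2 t ht0
      have heq : (∫ s in t..(t+T), (1 - α s)) = T - ∫ s in t..(t+T), α s := by
        rw [intervalIntegral.integral_sub (intervalIntegrable_const) 
          (PE.intervalIntegrable hα.1 hα.2.1 _ _)]
        simp
      have h2 : (∫ s in t..(t+T), (1 - α s)) ≤ 0 := by rw [heq]; linarith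
      rw [intervalIntegral.integral_of_le (by linarith)] at h2
      have h3 : 0 ≤ ∫ s in Set.Ioc t (t + T), (1 - α s) :=
        MeasureTheory.setIntegral_nonneg measurableSet_Ioc (fun s _ => by
          have := (hα.2.1 s).2; linarith)
      linarith
    have := (MeasureTheory.setIntegral_eq_zero_iff_of_nonneg_ae hnn hint).1 hzero
    rw [Filter.EventuallyEq, MeasureTheory.ae_restrict_iff' measurableSet_Ioc] at this
    filter_upwards [this] with s hs hmem
    have := hs hmem; simp at this; linarith [this]
  have h0 : ∀ᵐ s : ℝ, s ≠ 0 := by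
    rw [MeasureTheory.ae_iff]
    have : {s : ℝ | ¬ s ≠ 0} = {0} := by ext s; simp
    rw [this]; exact Real.volume_singleton
  filter_upwards [MeasureTheory.ae_all_iff.2 hj, h0] with s hs hs0 hpos
  have hspos : 0 < s := lt_of_le_of_ne hpos (Ne.symm hs0)
  set j : ℕ := ⌈s / T⌉₊ - 1 with hjdef
  have hcpos : 0 < ⌈s / T⌉₊ := Nat.ceil_pos.2 (by positivity)
  have hj1 : (j : ℕ) + 1 = ⌈s / T⌉₊ := by omega
  have hupper : s ≤ ((j:ℝ) + 1) * T := by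
    have := Nat.le_ceil (s / T)
    rw [← hj1] at this; push_cast at this
    calc s = (s / T) * T := by field_simp
    _ ≤ ((j:ℝ) + 1) * T := by apply mul_le_mul_of_nonneg_right this hT.le
  have hlower : (j:ℝ) * T < s := by
    by_contra hcon
    push_neg at hcon
    have : s / T ≤ (j : ℝ) := by
      rw [div_le_iff₀ hT]; linarith
    have h5 : ⌈s / T⌉₊ ≤ j := Nat.ceil_le.2 this
    omega
  exact hs j ⟨hlower, by linarith [hupper]⟩

-- II.b : pole placement: choice of K making A - b Kᵀ + m I nilpotent

lemma sum_mulVec {n : ℕ} {ι : Type*} (s : Finset ι) (f : ι → Matrix (Fin n) (Fin n) ℝ)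
    (v : Fin n → ℝ) : (∑ j ∈ s, f j) *ᵥ v = ∑ j ∈ s, (f j) *ᵥ v := by
  induction s using Finset.cons_induction with
  | empty => simp [Matrix.zero_mulVec]
  | cons a s ha ih => rw [Finset.sum_cons, Finset.sum_cons, Matrix.add_mulVec, ih]

lemma smul_one_add_pow {n : ℕ} (X : Matrix (Fin n) (Fin n) ℝ) (m : ℝ) (N : ℕ) :
    (X + m • (1 : Matrix (Fin n) (Fin n) ℝ)) ^ N
      = ∑ j ∈ Finset.range (N + 1), (((N.choose j : ℝ)) * m ^ (N - j)) • X ^ j := by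
  have hc : Commute X (m • (1 : Matrix (Fin n) (Fin n) ℝ)) := (Commute.one_right X).smul_right m
  rw [hc.add_pow]
  refine Finset.sum_congr rfl fun j _ => ?_
  rw [smul_pow, one_pow, mul_smul_comm, mul_one, smul_mul_assoc]
  rw [show (X ^ j) * ((N.choose j : ℕ) : Matrix (Fin n) (Fin n) ℝ) = (N.choose j : ℕ) • (X ^ j) by
    rw [nsmul_eq_mul, (Nat.cast_commute (N.choose j) (X ^ j)).eq]]
  rw [← Nat.cast_smul_eq_nsmul ℝ, smul_smul, mul_comm]

lemma vecMulVec_mulVec {n : ℕ} (u v w : Fin n → ℝ) :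
    (vecMulVec u v) *ᵥ w = (v ⬝ᵥ w) • u := by
  ext i
  simp [Matrix.mulVec, vecMulVec_apply, dotProduct, Finset.mul_sum, Pi.smul_apply,
    smul_eq_mul, mul_comm, mul_left_comm]

lemma vecMulVec_transpose' {n : ℕ} (u v : Fin n → ℝ) :
    (vecMulVec u v)ᵀ = vecMulVec v u := by
  ext i j; simp [vecMulVec_apply, Matrix.transpose_apply, mul_comm]

lemma exists_K_nilpotent {n : ℕ} (hn : 0 < n) (A : Matrix (Fin n) (Fin n) ℝ) (b : Fin n → ℝ)
    (hctrl : IsControllable A b) (m : ℝ) :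
    ∃ K : Fin n → ℝ, (A - vecMulVec b K + m • (1 : Matrix (Fin n) (Fin n) ℝ)) ^ n = 0 := by
  classical
  set C : Matrix (Fin n) (Fin n) ℝ := Matrix.of fun i j : Fin n => (A ^ (j : ℕ)).mulVec b i
    with hCdef
  -- get η with Cᵀ *ᵥ η = e_last
  have hrange : LinearMap.range (Cᵀ).mulVecLin = ⊤ := by
    apply Submodule.eq_top_of_finrank_eq
    have : (Cᵀ).rank = n := by rw [Matrix.rank_transpose]; exact hctrl
    rw [Matrix.rank] at this
    rw [this, Module.finrank_fin_fun]
  set lastIdx : Fin n := ⟨n - 1, by omega⟩ with hlastIdx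
  obtain ⟨η, hη⟩ := (LinearMap.range_eq_top.1 hrange) (Pi.single lastIdx (1:ℝ))
  rw [Matrix.mulVecLin_apply] at hη
  -- the moments
  set w : ℕ → ℝ := fun s => η ⬝ᵥ (A ^ s) *ᵥ b with hwdef
  have hwlt : ∀ s : ℕ, (hs : s < n) → w s = if s = n - 1 then 1 else 0 := by
    intro s hs
    have h1 : (Cᵀ *ᵥ η) ⟨s, hs⟩ = w s := by
      simp only [Matrix.mulVec, Matrix.transpose_apply, dotProduct, hCdef, Matrix.of_apply,
        hwdef]
      exact Finset.sum_congr rfl fun k _ => by rw [mul_comm]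
    rw [← h1, hη]
    rw [Pi.single_apply]
    by_cases hcase : s = n - 1
    · simp [hcase, hlastIdx]
    · have : (⟨s, hs⟩ : Fin n) ≠ lastIdx := by
        simp only [hlastIdx, Ne, Fin.mk.injEq]; exact hcase
      simp [this, hcase]
  -- the dual chain
  set z : ℕ → (Fin n → ℝ) := fun j => ((Aᵀ) ^ j) *ᵥ η with hzdef
  have hbz : ∀ j : ℕ, b ⬝ᵥ z j = w j := by
    intro j
    rw [hzdef]
    simp only
    rw [← Matrix.transpose_pow, Matrix.mulVec_transpose, dotProduct_comm,
      ← Matrix.dotProduct_mulVec]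
  have hzsucc : ∀ j : ℕ, Aᵀ *ᵥ z j = z (j + 1) := by
    intro j
    show Aᵀ *ᵥ ((Aᵀ ^ j) *ᵥ η) = (Aᵀ ^ (j+1)) *ᵥ η
    rw [pow_succ' (Aᵀ) j, ← Matrix.mulVec_mulVec]
  set K : Fin n → ℝ := ((Aᵀ + m • (1 : Matrix (Fin n) (Fin n) ℝ)) ^ n) *ᵥ η with hKdef
  set B : Matrix (Fin n) (Fin n) ℝ := Aᵀ - vecMulVec K b with hBdef
  have hBmul : ∀ (v : Fin n → ℝ), B *ᵥ v = Aᵀ *ᵥ v - (b ⬝ᵥ v) • K := by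
    intro v; rw [hBdef, Matrix.sub_mulVec, vecMulVec_mulVec]
  have hchain : ∀ j : ℕ, j + 1 < n → B *ᵥ z j = z (j + 1) := by
    intro j hj
    rw [hBmul, hbz, hwlt j (by omega), if_neg (by omega), zero_smul, sub_zero, hzsucc]
  have hBlast : B *ᵥ z (n - 1) = z n - K := by
    rw [hBmul, hbz, hwlt (n-1) (by omega), if_pos rfl, one_smul]
    congr 1
    rw [hzsucc (n-1), show n - 1 + 1 = n by omega]
  have hzB : ∀ j : ℕ, j < n → (B ^ j) *ᵥ z 0 = z j := by
    intro j
    induction j with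
    | zero => intro _; simp [Matrix.one_mulVec]
    | succ j ih =>
      intro hj
      rw [pow_succ' B j, ← Matrix.mulVec_mulVec, ih (by omega), hchain j hj]
  -- expansion coefficients
  set c : ℕ → ℝ := fun j => ((n.choose j : ℝ)) * m ^ (n - j) with hcdef
  have hKsum : K = ∑ j ∈ Finset.range n, c j • z j + z n := by
    rw [hKdef, smul_one_add_pow, sum_mulVec, Finset.sum_range_succ]
    simp only [Matrix.smul_mulVec]
    congr 1
    simp only [Nat.choose_self, Nat.cast_one, Nat.sub_self, pow_zero, mul_one, one_smul]
    rfl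
  have hpow : B ^ n = B * B ^ (n - 1) := by
    obtain ⟨n', rfl⟩ : ∃ n', n = n' + 1 := ⟨n - 1, by omega⟩
    rw [Nat.add_sub_cancel, pow_succ']
  have hgoal0 : ((B + m • (1 : Matrix (Fin n) (Fin n) ℝ)) ^ n) *ᵥ z 0 = 0 := by
    rw [smul_one_add_pow, _root_.sum_mulVec, Finset.sum_range_succ]
    simp only [Matrix.smul_mulVec]
    have hlast : (((n.choose n : ℝ)) * m ^ (n - n)) • ((B ^ n) *ᵥ z 0) = z n - K := by
      simp only [Nat.choose_self, Nat.cast_one, Nat.sub_self, pow_zero, mul_one, one_smul]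
      rw [hpow, ← Matrix.mulVec_mulVec, hzB (n-1) (by omega), hBlast]
    rw [hlast]
    have hsum : ∀ j ∈ Finset.range n,
        (((n.choose j : ℝ)) * m ^ (n - j)) • ((B ^ j) *ᵥ z 0) = c j • z j := by
      intro j hj
      rw [hzB j (Finset.mem_range.1 hj)]
    rw [Finset.sum_congr rfl hsum, hKsum]
    abel
  have hgoalj : ∀ i : ℕ, i < n → ((B + m • (1 : Matrix (Fin n) (Fin n) ℝ)) ^ n) *ᵥ z i = 0 := by
    intro i hi
    have hcomm : Commute (B ^ i) ((B + m • (1 : Matrix (Fin n) (Fin n) ℝ)) ^ n) := by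
      apply Commute.pow_pow
      exact (Commute.refl B).add_right ((Commute.one_right B).smul_right m)
    rw [← hzB i hi, Matrix.mulVec_mulVec, ← hcomm, ← Matrix.mulVec_mulVec, hgoal0,
      Matrix.mulVec_zero]
  -- the matrix Zt with columns z 0, ..., z (n-1)
  set Zt : Matrix (Fin n) (Fin n) ℝ := Matrix.of fun i j : Fin n => z (j : ℕ) i with hZtdef
  have hZ : (B + m • (1 : Matrix (Fin n) (Fin n) ℝ)) ^ n * Zt = 0 := by
    ext i j
    have : ((B + m • (1 : Matrix (Fin n) (Fin n) ℝ)) ^ n * Zt) i j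
        = (((B + m • (1 : Matrix (Fin n) (Fin n) ℝ)) ^ n) *ᵥ z (j : ℕ)) i := by
      simp [Matrix.mul_apply, Matrix.mulVec, dotProduct, hZtdef]
    rw [this, hgoalj (j : ℕ) j.isLt]
    simp
  -- Zt is invertible
  have hP : ∀ i k : Fin n, (Ztᵀ * C) i k = w ((i : ℕ) + (k : ℕ)) := by
    intro i k
    have h1 : (Ztᵀ * C) i k = z (i : ℕ) ⬝ᵥ ((A ^ (k : ℕ)) *ᵥ b) := by
      simp [Matrix.mul_apply, dotProduct, hZtdef, hCdef]
    rw [h1, hzdef]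
    simp only
    rw [← Matrix.transpose_pow, Matrix.mulVec_transpose,
      ← Matrix.dotProduct_mulVec, Matrix.mulVec_mulVec, ← pow_add]
  have hdetQ : (Ztᵀ * C).det ≠ 0 := by
    set σ : Equiv.Perm (Fin n) := (Fin.revPerm : Equiv.Perm (Fin n)) with hσ
    set Q : Matrix (Fin n) (Fin n) ℝ := (Ztᵀ * C).submatrix id σ with hQdef
    have hQtri : Q.BlockTriangular OrderDual.toDual := by
      intro i k hik
      have hik' : (i : ℕ) < (k : ℕ) := hik
      rw [hQdef, Matrix.submatrix_apply, id_eq, hσ, hP]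
      have : (i : ℕ) + ((Fin.revPerm k : Fin n) : ℕ) < n - 1 := by
        have : ((Fin.revPerm k : Fin n) : ℕ) = n - 1 - (k : ℕ) := by
          simp [Fin.revPerm, Fin.rev]; omega
        rw [this]
        have hkn : (k : ℕ) < n := k.isLt
        omega
      rw [hwlt _ (by omega), if_neg (by omega)]
    have hQdiag : ∀ i : Fin n, Q i i = 1 := by
      intro i
      rw [hQdef, Matrix.submatrix_apply, id_eq, hσ, hP]
      have : (i : ℕ) + ((Fin.revPerm i : Fin n) : ℕ) = n - 1 := by
        simp [Fin.revPerm, Fin.rev]; omega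
      rw [this, hwlt (n-1) (by omega), if_pos rfl]
    have hdet : Q.det = 1 := by
      rw [Matrix.det_of_lowerTriangular Q hQtri]
      simp [hQdiag]
    have hQP : Q.det = Equiv.Perm.sign σ * (Ztᵀ * C).det := by
      rw [hQdef, Matrix.det_permute']
    intro hcon
    rw [hQP, hcon] at hdet
    simp at hdet
  have hZtunit : IsUnit Zt.det := by
    rw [Matrix.det_mul] at hdetQ
    have : Ztᵀ.det ≠ 0 := fun h => hdetQ (by rw [h, zero_mul])
    rw [Matrix.det_transpose] at this
    exact isUnit_iff_ne_zero.2 this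
  have hBzero : (B + m • (1 : Matrix (Fin n) (Fin n) ℝ)) ^ n = 0 := by
    haveI := Zt.invertibleOfIsUnitDet hZtunit
    calc (B + m • (1 : Matrix (Fin n) (Fin n) ℝ)) ^ n
        = (B + m • (1 : Matrix (Fin n) (Fin n) ℝ)) ^ n * (Zt * ⅟Zt) := by
          rw [mul_invOf_self, mul_one]
      _ = ((B + m • (1 : Matrix (Fin n) (Fin n) ℝ)) ^ n * Zt) * ⅟Zt := by rw [mul_assoc]
      _ = 0 := by rw [hZ, zero_mul]
  refine ⟨K, ?_⟩
  have htr : A - vecMulVec b K + m • (1 : Matrix (Fin n) (Fin n) ℝ)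
      = (B + m • (1 : Matrix (Fin n) (Fin n) ℝ))ᵀ := by
    rw [hBdef, Matrix.transpose_add, Matrix.transpose_sub, Matrix.transpose_transpose,
      vecMulVec_transpose', Matrix.transpose_smul, Matrix.transpose_one]
  rw [htr, ← Matrix.transpose_pow, hBzero, Matrix.transpose_zero]

section AnalyticCore

attribute [local instance] Matrix.linftyOpNormedRing Matrix.linftyOpNormedAlgebra

noncomputable def mvL {n : ℕ} (x₀ : Fin n → ℝ) :
    Matrix (Fin n) (Fin n) ℝ →L[ℝ] (Fin n → ℝ) :=
  LinearMap.toContinuousLinearMap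
    { toFun := fun X => X *ᵥ x₀
      map_add' := fun X Y => Matrix.add_mulVec X Y x₀
      map_smul' := fun r X => Matrix.smul_mulVec r X x₀ }

lemma mvL_apply {n : ℕ} (x₀ : Fin n → ℝ) (X : Matrix (Fin n) (Fin n) ℝ) :
    mvL x₀ X = X *ᵥ x₀ := rfl

noncomputable def mulVecCLM {n : ℕ} (M : Matrix (Fin n) (Fin n) ℝ) :
    (Fin n → ℝ) →L[ℝ] (Fin n → ℝ) :=
  LinearMap.toContinuousLinearMap M.mulVecLin

lemma mulVecCLM_apply {n : ℕ} (M : Matrix (Fin n) (Fin n) ℝ) (v : Fin n → ℝ) :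
    mulVecCLM M v = M *ᵥ v := rfl

lemma expc_hasDerivAt {n : ℕ} (M : Matrix (Fin n) (Fin n) ℝ) (x₀ : Fin n → ℝ) (t : ℝ) :
    HasDerivAt (fun u : ℝ => (NormedSpace.exp (u • M)) *ᵥ x₀)
      (M *ᵥ ((NormedSpace.exp (t • M)) *ᵥ x₀)) t := by
  have h1 : HasDerivAt (fun u : ℝ => NormedSpace.exp (u • M))
      (M * NormedSpace.exp (t • M)) t := hasDerivAt_exp_smul_const' M t
  have h2 := ((mvL x₀).hasFDerivAt.comp_hasDerivAt t h1)
  simp only [Function.comp_def, mvL_apply] at h2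
  change HasDerivAt _ ((M * NormedSpace.exp (t • M)) *ᵥ x₀) t at h2
  rwa [← Matrix.mulVec_mulVec] at h2

lemma expc_continuous {n : ℕ} (M : Matrix (Fin n) (Fin n) ℝ) (x₀ : Fin n → ℝ) :
    Continuous (fun u : ℝ => (NormedSpace.exp (u • M)) *ᵥ x₀) :=
  continuous_iff_continuousAt.2 fun t => (expc_hasDerivAt M x₀ t).continuousAt

lemma expc_zero {n : ℕ} (M : Matrix (Fin n) (Fin n) ℝ) (x₀ : Fin n → ℝ) :
    (NormedSpace.exp ((0:ℝ) • M)) *ᵥ x₀ = x₀ := by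
  rw [zero_smul, NormedSpace.exp_zero, Matrix.one_mulVec]

lemma sol_eq_exp {n : ℕ} (M : Matrix (Fin n) (Fin n) ℝ) (x₀ : Fin n → ℝ)
    (x : ℝ → Fin n → ℝ)
    (hx : ∀ t : ℝ, 0 ≤ t → x t = x₀ + ∫ u in (0:ℝ)..t, M *ᵥ (x u)) :
    ∀ t : ℝ, 0 ≤ t → x t = (NormedSpace.exp (t • M)) *ᵥ x₀ := by
  classical
  set g : ℝ → (Fin n → ℝ) := fun u => M *ᵥ (x u) with hgdef
  set c : ℝ → (Fin n → ℝ) := fun t => (NormedSpace.exp (t • M)) *ᵥ x₀ with hcdef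
  have hc0 : c 0 = x₀ := expc_zero M x₀
  have hcd : ∀ t : ℝ, HasDerivAt c (M *ᵥ (c t)) t := fun t => expc_hasDerivAt M x₀ t
  have hccont : Continuous c := expc_continuous M x₀
  have hx00 : x 0 = x₀ := by
    have := hx 0 le_rfl
    rwa [intervalIntegral.integral_same, add_zero] at this
  have keyP : ∀ s : ℝ, 0 ≤ s → (∀ t ∈ Set.Icc (0:ℝ) s, IntervalIntegrable g volume 0 t) →
      ∀ t ∈ Set.Icc (0:ℝ) s, x t = c t := by
    intro s hs hint
    rcases eq_or_lt_of_le hs with hs0 | hspos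
    · intro t ht
      have ht0 : t = 0 := le_antisymm (hs0 ▸ ht.2) ht.1
      rw [ht0, hx00, hc0]
    have hxc : ContinuousOn x (Set.Icc 0 s) := by
      have hprim : ContinuousOn (fun t : ℝ => x₀ + ∫ u in (0:ℝ)..t, g u) (Set.Icc 0 s) := by
        apply continuousOn_const.add
        have h1 := intervalIntegral.continuousOn_primitive_interval'
          (hint s ⟨hs, le_rfl⟩) (Set.left_mem_uIcc (a := (0:ℝ)) (b := s))
        rwa [Set.uIcc_of_le hs] at h1
      exact hprim.congr (fun t ht => hx t ht.1)
    have hg_cont : ContinuousOn g (Set.Icc 0 s) := by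
      have h1 := (mulVecCLM M).continuous.comp_continuousOn hxc
      exact h1
    have hderiv : ∀ t ∈ Set.Ico (0:ℝ) s, HasDerivWithinAt x (M *ᵥ (x t)) (Set.Ici t) t := by
      intro t ht
      have hIoc_mem : Set.Ioc t s ∈ nhdsWithin t (Set.Ioi t) := by
        rw [show Set.Ioc t s = Set.Ioi t ∩ Set.Iic s from rfl]
        exact Filter.inter_mem self_mem_nhdsWithin
          (mem_nhdsWithin_of_mem_nhds (Iic_mem_nhds ht.2))
      have hsub : Set.Ioc t s ⊆ Set.Icc 0 s := fun u hu => ⟨le_trans ht.1 hu.1.le, hu.2⟩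
      have hmeas : StronglyMeasurableAtFilter g (nhdsWithin t (Set.Ioi t)) volume :=
        ⟨Set.Ioc t s, hIoc_mem, (hg_cont.mono hsub).aestronglyMeasurable measurableSet_Ioc⟩
      have hcw : ContinuousWithinAt g (Set.Ioi t) t := by
        have h1 : ContinuousWithinAt g (Set.Ioc t s) t :=
          (hg_cont t ⟨ht.1, ht.2.le⟩).mono hsub
        exact h1.mono_of_mem_nhdsWithin hIoc_mem
      have hFd : HasDerivWithinAt (fun u : ℝ => ∫ r in (0:ℝ)..u, g r) (g t) (Set.Ici t) t :=
        intervalIntegral.integral_hasDerivWithinAt_right (hint t ⟨ht.1, ht.2.le⟩) hmeas hcw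
      exact (hFd.const_add x₀).congr (fun u hu => hx u (le_trans ht.1 hu)) (hx t ht.1)
    have hLip : ∀ _t : ℝ, LipschitzWith ‖mulVecCLM M‖₊ (fun y : Fin n → ℝ => M *ᵥ y) := by
      intro _
      exact (mulVecCLM M).lipschitz
    have heq := ODE_solution_unique (v := fun _ y => M *ᵥ y) hLip hxc hderiv
      hccont.continuousOn (fun t _ => (hcd t).hasDerivWithinAt) (by rw [hx00, hc0])
    exact fun t ht => heq ht
  by_cases hB : ∀ t : ℝ, 0 ≤ t → IntervalIntegrable g volume 0 t
  · intro t ht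
    exact keyP t ht (fun u hu => hB u hu.1) t ⟨ht, le_rfl⟩
  exfalso
  push_neg at hB
  obtain ⟨t₁, ht₁0, ht₁⟩ := hB
  set Bad : Set ℝ := {t : ℝ | 0 ≤ t ∧ ¬ IntervalIntegrable g volume 0 t} with hBad
  have hBne : Bad.Nonempty := ⟨t₁, ht₁0, ht₁⟩
  have hBbdd : BddBelow Bad := ⟨0, fun u hu => hu.1⟩
  set ts := sInf Bad with hts
  have hts0 : 0 ≤ ts := le_csInf hBne (fun u hu => hu.1)
  have hmono : ∀ u ∈ Bad, ∀ v : ℝ, u ≤ v → v ∈ Bad := by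
    intro u hu v huv
    refine ⟨hu.1.trans huv, fun hiv => hu.2 (hiv.mono_set ?_)⟩
    rw [Set.uIcc_of_le hu.1, Set.uIcc_of_le (hu.1.trans huv)]
    exact Set.Icc_subset_Icc le_rfl huv
  have hup : ∀ u : ℝ, ts < u → u ∈ Bad := by
    intro u hu
    obtain ⟨w, hw, hwu⟩ := exists_lt_of_csInf_lt hBne hu
    exact hmono w hw u hwu.le
  have hgood : ∀ u : ℝ, 0 ≤ u → u < ts → IntervalIntegrable g volume 0 u := by
    intro u h0 hu
    by_contra hbad
    exact absurd (csInf_le hBbdd ⟨h0, hbad⟩) (not_le.2 hu)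
  have heqc : ∀ u : ℝ, 0 ≤ u → u < ts → x u = c u := by
    intro u h0 hu
    exact keyP u h0 (fun r hr => hgood r hr.1 (lt_of_le_of_lt hr.2 hu)) u ⟨h0, le_rfl⟩
  have hne_ts : ∀ᵐ u : ℝ, u ≠ ts := by
    rw [MeasureTheory.ae_iff]
    have : {u : ℝ | ¬ u ≠ ts} = {ts} := by ext u; simp
    rw [this]
    exact Real.volume_singleton
  have hts_good : IntervalIntegrable g volume 0 ts := by
    have hint_c : IntervalIntegrable (fun u : ℝ => M *ᵥ (c u)) volume 0 ts :=
      ((mulVecCLM M).continuous.comp hccont).intervalIntegrable 0 ts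
    rw [intervalIntegrable_iff_integrableOn_Ioc_of_le hts0] at hint_c ⊢
    apply hint_c.congr
    rw [Filter.EventuallyEq, MeasureTheory.ae_restrict_iff' measurableSet_Ioc]
    filter_upwards [hne_ts] with u hne hmem
    have hu_lt : u < ts := lt_of_le_of_ne hmem.2 hne
    rw [hgdef]
    simp only
    rw [heqc u hmem.1.le hu_lt]
  have hxconst : ∀ u : ℝ, ts < u → x u = x₀ := by
    intro u hu
    have hbadu : ¬ IntervalIntegrable g volume 0 u := (hup u hu).2
    rw [hx u (hts0.trans hu.le), intervalIntegral.integral_undef hbadu, add_zero]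
  have hcontr : IntervalIntegrable g volume 0 (ts + 1) := by
    apply hts_good.trans (b := ts)
    have hconst : IntervalIntegrable (fun _ : ℝ => M *ᵥ x₀) volume ts (ts+1) :=
      intervalIntegrable_const
    rw [intervalIntegrable_iff_integrableOn_Ioc_of_le (by linarith)] at hconst ⊢
    apply hconst.congr
    rw [Filter.EventuallyEq, MeasureTheory.ae_restrict_iff' measurableSet_Ioc]
    filter_upwards with u hmem
    rw [hgdef]
    simp only
    rw [hxconst u hmem.1]
  exact (hup (ts+1) (by linarith)).2 hcontr

lemma exp_smul_one {n : ℕ} (r : ℝ) :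
    NormedSpace.exp (r • (1 : Matrix (Fin n) (Fin n) ℝ)) = Real.exp r • 1 := by
  have halgcont : Continuous (algebraMap ℝ (Matrix (Fin n) (Fin n) ℝ)) := by
    have hc : Continuous fun s : ℝ => s • (1 : Matrix (Fin n) (Fin n) ℝ) :=
      continuous_id.smul continuous_const
    have hfun : (algebraMap ℝ (Matrix (Fin n) (Fin n) ℝ) : ℝ → Matrix (Fin n) (Fin n) ℝ)
        = fun s : ℝ => s • (1 : Matrix (Fin n) (Fin n) ℝ) := by
      funext s; exact Algebra.algebraMap_eq_smul_one s
    rw [hfun]; exact hc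
  have hmap := NormedSpace.map_exp (algebraMap ℝ (Matrix (Fin n) (Fin n) ℝ)) halgcont r
  calc NormedSpace.exp (r • (1 : Matrix (Fin n) (Fin n) ℝ))
      = NormedSpace.exp (algebraMap ℝ (Matrix (Fin n) (Fin n) ℝ) r) := by
        rw [Algebra.algebraMap_eq_smul_one]
    _ = algebraMap ℝ (Matrix (Fin n) (Fin n) ℝ) (NormedSpace.exp r) := hmap.symm
    _ = Real.exp r • 1 := by rw [Real.exp_eq_exp_ℝ, Algebra.algebraMap_eq_smul_one]

lemma exp_norm_bound {n : ℕ} (hn : 0 < n) (M : Matrix (Fin n) (Fin n) ℝ) (m : ℝ)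
    (hnil : (M + m • (1 : Matrix (Fin n) (Fin n) ℝ)) ^ n = 0) :
    ∃ Cst : ℝ, 0 < Cst ∧ ∀ t : ℝ, 0 ≤ t →
      ‖NormedSpace.exp (t • M)‖ ≤ Cst * Real.exp ((1/2 - m) * t) := by
  set N₁ := M + m • (1 : Matrix (Fin n) (Fin n) ℝ) with hN
  refine ⟨(∑ k ∈ Finset.range n, 2^k * ‖N₁ ^ k‖) + 1, by positivity, ?_⟩
  intro t ht
  have hsplit : t • M = (-(m*t)) • (1 : Matrix (Fin n) (Fin n) ℝ) + t • N₁ := by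
    rw [hN, smul_add, smul_smul, show t * m = m * t from mul_comm t m,
      add_comm (t • M) ((m*t) • (1 : Matrix (Fin n) (Fin n) ℝ)), ← add_assoc,
      ← add_smul, neg_add_cancel, zero_smul, zero_add]
  have hcomm : Commute ((-(m*t)) • (1 : Matrix (Fin n) (Fin n) ℝ)) (t • N₁) :=
    (Commute.one_left (t • N₁)).smul_left _
  rw [hsplit, Matrix.exp_add_of_commute _ _ hcomm, exp_smul_one, smul_mul_assoc, one_mul,
    norm_smul, Real.norm_eq_abs, Real.abs_exp]
  have hexpN : NormedSpace.exp (t • N₁)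
      = ∑ k ∈ Finset.range n, ((k.factorial : ℝ)⁻¹ * t^k) • N₁ ^ k := by
    have hets := congrFun (NormedSpace.exp_eq_tsum (𝕂 := ℝ)
      (𝔸 := Matrix (Fin n) (Fin n) ℝ)) (t • N₁)
    have hzero : ∀ k ∉ Finset.range n, ((k.factorial : ℝ)⁻¹) • (t • N₁)^k = 0 := by
      intro k hk
      rw [Finset.mem_range, not_lt] at hk
      have hNk : N₁ ^ k = 0 := by
        have h1 : N₁ ^ k = N₁ ^ (k - n) * N₁ ^ n := by rw [← pow_add]; congr 1; omega
        rw [h1, hnil, mul_zero]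
      rw [smul_pow, hNk, smul_zero, smul_zero]
    rw [hets, tsum_eq_sum hzero]
    exact Finset.sum_congr rfl fun k _ => by rw [smul_pow, smul_smul]
  rw [hexpN]
  have hterm : ∀ k ∈ Finset.range n,
      ‖((k.factorial : ℝ)⁻¹ * t^k) • N₁ ^ k‖ ≤ (2^k * ‖N₁ ^ k‖) * Real.exp (t/2) := by
    intro k _
    rw [norm_smul, Real.norm_eq_abs]
    have h1 : |(k.factorial : ℝ)⁻¹ * t^k| = t^k / (k.factorial : ℝ) := by
      rw [abs_of_nonneg (by positivity), inv_mul_eq_div]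
    rw [h1]
    have h2 : (t/2)^k / (k.factorial : ℝ) ≤ Real.exp (t/2) := by
      calc (t/2)^k / (k.factorial : ℝ)
          ≤ ∑ i ∈ Finset.range (k+1), (t/2)^i / (i.factorial : ℝ) := by
            apply Finset.single_le_sum (f := fun i => (t/2)^i / (i.factorial : ℝ))
              (fun i _ => by positivity) (Finset.self_mem_range_succ k)
        _ ≤ Real.exp (t/2) := Real.sum_le_exp_of_nonneg (by positivity) _
    have h3 : t^k / (k.factorial : ℝ) = 2^k * ((t/2)^k / (k.factorial : ℝ)) := by
      rw [div_pow]
      field_simp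
      try ring
    calc t^k / (k.factorial : ℝ) * ‖N₁ ^ k‖ = (2^k * ((t/2)^k / (k.factorial : ℝ))) * ‖N₁ ^ k‖ := by rw [h3]
      _ ≤ (2^k * Real.exp (t/2)) * ‖N₁ ^ k‖ := by
          apply mul_le_mul_of_nonneg_right _ (norm_nonneg _)
          exact mul_le_mul_of_nonneg_left h2 (by positivity)
      _ = (2^k * ‖N₁ ^ k‖) * Real.exp (t/2) := by ring
  have hsum : ‖∑ k ∈ Finset.range n, ((k.factorial : ℝ)⁻¹ * t^k) • N₁ ^ k‖
      ≤ (∑ k ∈ Finset.range n, 2^k * ‖N₁ ^ k‖) * Real.exp (t/2) := by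
    calc ‖∑ k ∈ Finset.range n, ((k.factorial : ℝ)⁻¹ * t^k) • N₁ ^ k‖
        ≤ ∑ k ∈ Finset.range n, ‖((k.factorial : ℝ)⁻¹ * t^k) • N₁ ^ k‖ := norm_sum_le _ _
      _ ≤ ∑ k ∈ Finset.range n, (2^k * ‖N₁ ^ k‖) * Real.exp (t/2) :=
          Finset.sum_le_sum hterm
      _ = (∑ k ∈ Finset.range n, 2^k * ‖N₁ ^ k‖) * Real.exp (t/2) := by
          rw [Finset.sum_mul]
  calc Real.exp (-(m*t)) * ‖∑ k ∈ Finset.range n, ((k.factorial : ℝ)⁻¹ * t^k) • N₁ ^ k‖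
      ≤ Real.exp (-(m*t)) * ((∑ k ∈ Finset.range n, 2^k * ‖N₁ ^ k‖) * Real.exp (t/2)) :=
        mul_le_mul_of_nonneg_left hsum (Real.exp_nonneg _)
    _ = (∑ k ∈ Finset.range n, 2^k * ‖N₁ ^ k‖) * Real.exp ((1/2 - m) * t) := by
        rw [← mul_assoc, mul_comm (Real.exp (-(m*t))), mul_assoc, ← Real.exp_add]
        congr 2
        ring
    _ ≤ ((∑ k ∈ Finset.range n, 2^k * ‖N₁ ^ k‖) + 1) * Real.exp ((1/2 - m) * t) := by
        apply mul_le_mul_of_nonneg_right _ (Real.exp_nonneg _)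
        have : (0:ℝ) ≤ ∑ k ∈ Finset.range n, 2^k * ‖N₁ ^ k‖ := by positivity
        linarith

lemma exp_mulVec_ne_zero {n : ℕ} (M : Matrix (Fin n) (Fin n) ℝ) (x₀ : Fin n → ℝ)
    (hx₀ : x₀ ≠ 0) (t : ℝ) : (NormedSpace.exp (t • M)) *ᵥ x₀ ≠ 0 := by
  intro hzero
  obtain ⟨u, hu⟩ := Matrix.isUnit_exp (t • M)
  apply hx₀
  have h1 : ((u⁻¹ : (Matrix (Fin n) (Fin n) ℝ)ˣ) : Matrix (Fin n) (Fin n) ℝ) *ᵥ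
      ((u : Matrix (Fin n) (Fin n) ℝ) *ᵥ x₀) = x₀ := by
    rw [Matrix.mulVec_mulVec, Units.inv_mul, Matrix.one_mulVec]
  rw [hu] at h1
  rw [hzero, Matrix.mulVec_zero] at h1
  exact h1.symm

end AnalyticCore

-- II.d : RCmax A b T T = ⊤

lemma ereal_top_of_forall_le (a : EReal) (h : ∀ r : ℝ, (r : EReal) ≤ a) : a = ⊤ := by
  by_contra hne
  have hlt : a < ⊤ := lt_top_iff_ne_top.2 hne
  obtain ⟨y, hy1, _⟩ := EReal.exists_between_coe_real hlt
  exact absurd (h y) (not_le.2 hy1)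

section RCTop

attribute [local instance] Matrix.linftyOpNormedRing Matrix.linftyOpNormedAlgebra

theorem rcmax_TT_top {n : ℕ} (hn : 0 < n) (A : Matrix (Fin n) (Fin n) ℝ) (b : Fin n → ℝ)
    (hctrl : IsControllable A b) {T : ℝ} (hT : 0 < T) : RCmax A b T T = ⊤ := by
  apply ereal_top_of_forall_le
  intro r
  set m : ℝ := r + 1 with hm
  obtain ⟨K, hKnil⟩ := exists_K_nilpotent hn A b hctrl m
  set M' : Matrix (Fin n) (Fin n) ℝ := A - vecMulVec b K with hM'
  obtain ⟨Cst, hCpos, hCb⟩ := exp_norm_bound hn M' m hKnil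
  suffices h : (⨆ (α : ℝ → ℝ) (_ : IsPESignal T T α), lamPlus A b K α)
      ≤ ((1/2 - m : ℝ) : EReal) by
    refine le_trans ?_ (le_iSup (fun K => rateC A b T T K) K)
    rw [rateC]
    calc (r : EReal) ≤ ((m - 1/2 : ℝ) : EReal) := by
          rw [EReal.coe_le_coe_iff]; linarith
      _ = -((1/2 - m : ℝ) : EReal) := by
          rw [← EReal.coe_neg]; norm_num
      _ ≤ -(⨆ (α : ℝ → ℝ) (_ : IsPESignal T T α), lamPlus A b K α) :=
          EReal.neg_le_neg_iff.2 h
  apply iSup_le; intro α; apply iSup_le; intro hα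
  rw [lamPlus]
  apply iSup_le; intro x₀; apply iSup_le; intro hx₀
  apply iSup_le; intro x; apply iSup_le; intro hsol
  have hae := pe_TT_ae_one hT hα
  have hxeq : ∀ t : ℝ, 0 ≤ t → x t = x₀ + ∫ u in (0:ℝ)..t, M' *ᵥ (x u) := by
    intro t ht
    rw [hsol.2 t ht]
    congr 1
    apply intervalIntegral.integral_congr_ae
    filter_upwards [hae] with u hu hmem
    rw [Set.uIoc_of_le ht] at hmem
    rw [hu hmem.1.le, one_smul]
  have hxc := sol_eq_exp M' x₀ x hxeq
  have hx₀ne : x₀ ≠ 0 := by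
    intro hzero
    rw [hzero, norm_zero] at hx₀
    exact one_ne_zero hx₀.symm
  have hev : ∀ᶠ t in Filter.atTop, ((Real.log ‖x t‖ / t : ℝ) : EReal)
      ≤ ((Real.log Cst / t + (1/2 - m) : ℝ) : EReal) := by
    filter_upwards [Filter.eventually_ge_atTop (1:ℝ)] with t ht1
    have htpos : (0:ℝ) < t := by linarith
    rw [EReal.coe_le_coe_iff]
    have hxt := hxc t htpos.le
    have hnorm : ‖x t‖ ≤ Cst * Real.exp ((1/2 - m) * t) := by
      rw [hxt]
      calc ‖(NormedSpace.exp (t • M')) *ᵥ x₀‖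
          ≤ ‖NormedSpace.exp (t • M')‖ * ‖x₀‖ := Matrix.linfty_opNorm_mulVec _ _
        _ = ‖NormedSpace.exp (t • M')‖ := by rw [hx₀, mul_one]
        _ ≤ Cst * Real.exp ((1/2 - m) * t) := hCb t htpos.le
    have hxtpos : 0 < ‖x t‖ := by
      rw [hxt]
      exact norm_pos_iff.2 (exp_mulVec_ne_zero M' x₀ hx₀ne t)
    have hlog : Real.log ‖x t‖ ≤ Real.log Cst + (1/2 - m) * t := by
      calc Real.log ‖x t‖ ≤ Real.log (Cst * Real.exp ((1/2 - m) * t)) :=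
            Real.log_le_log hxtpos hnorm
        _ = Real.log Cst + (1/2 - m) * t := by
            rw [Real.log_mul (ne_of_gt hCpos) (Real.exp_ne_zero _), Real.log_exp]
    calc Real.log ‖x t‖ / t ≤ (Real.log Cst + (1/2 - m) * t) / t := by gcongr
      _ = Real.log Cst / t + (1/2 - m) := by
          rw [add_div, mul_div_cancel_right₀ _ (ne_of_gt htpos)]
  have hlim : Filter.Tendsto (fun t : ℝ => Real.log Cst / t + (1/2 - m)) Filter.atTop
      (nhds (1/2 - m)) := by
    have h1 : Filter.Tendsto (fun t : ℝ => Real.log Cst / t) Filter.atTop (nhds 0) :=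
      Filter.Tendsto.div_atTop tendsto_const_nhds Filter.tendsto_id
    have h2 := h1.add (tendsto_const_nhds (x := (1/2 - m : ℝ)))
    simpa using h2
  have hlims : Filter.limsup (fun t : ℝ => ((Real.log Cst / t + (1/2 - m) : ℝ) : EReal))
      Filter.atTop = ((1/2 - m : ℝ) : EReal) := (EReal.tendsto_coe.2 hlim).limsup_eq
  calc Filter.limsup (fun t : ℝ => ((Real.log ‖x t‖ / t : ℝ) : EReal)) Filter.atTop
      ≤ Filter.limsup (fun t : ℝ => ((Real.log Cst / t + (1/2 - m) : ℝ) : EReal))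
        Filter.atTop := Filter.limsup_le_limsup hev
    _ = _ := hlims

end RCTop

-- Part III : properties of rhoCrit and the limit theorem

section RhoCrit

variable {n : ℕ} (A : Matrix (Fin n) (Fin n) ℝ) (b : Fin n → ℝ)

end RhoCrit

def Sset {n : ℕ} (A : Matrix (Fin n) (Fin n) ℝ) (b : Fin n → ℝ) (T : ℝ) : Set ℝ :=
  {ρ : ℝ | ρ ∈ Set.Ioc (0:ℝ) 1 ∧ RCmax A b T (T * ρ) = ⊤}

lemma rhoCrit_eq_sInf_Sset {n : ℕ} (A : Matrix (Fin n) (Fin n) ℝ) (b : Fin n → ℝ) (T : ℝ) :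
    rhoCrit A b T = sInf (Sset A b T) := rfl

section RhoCrit

variable {n : ℕ} (A : Matrix (Fin n) (Fin n) ℝ) (b : Fin n → ℝ)

lemma one_mem_Sset (hn : 0 < n) (hctrl : IsControllable A b) {T : ℝ} (hT : 0 < T) :
    (1:ℝ) ∈ Sset A b T :=
  ⟨⟨one_pos, le_refl 1⟩, by rw [mul_one]; exact rcmax_TT_top hn A b hctrl hT⟩

lemma Sset_bddBelow {T : ℝ} : BddBelow (Sset A b T) := ⟨0, fun ρ hρ => hρ.1.1.le⟩

lemma rhoCrit_nonneg (hn : 0 < n) (hctrl : IsControllable A b) {T : ℝ} (hT : 0 < T) :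
    0 ≤ rhoCrit A b T :=
  le_csInf ⟨1, one_mem_Sset A b hn hctrl hT⟩ (fun ρ hρ => hρ.1.1.le)

lemma rhoCrit_le_one (hn : 0 < n) (hctrl : IsControllable A b) {T : ℝ} (hT : 0 < T) :
    rhoCrit A b T ≤ 1 :=
  csInf_le (Sset_bddBelow A b) (one_mem_Sset A b hn hctrl hT)

lemma mem_Sset_lower (hn : 0 < n) (hctrl : IsControllable A b) {T₀ T : ℝ}
    (h0 : 0 < T₀) (hTT : T₀ < T) {ρ : ℝ} (hρ : ρ ∈ Sset A b T) :
    rhoCrit A b T₀ * ((T - T₀) / T) ≤ ρ := by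
  have hT : 0 < T := h0.trans hTT
  set k : ℕ := ⌊T / T₀⌋₊ with hk
  have hk1 : 1 ≤ k := Nat.le_floor (by rw [Nat.cast_one, le_div_iff₀ h0, one_mul]; linarith)
  have hkpos : (0:ℝ) < k := by exact_mod_cast Nat.lt_of_lt_of_le Nat.zero_lt_one hk1
  have hkT : (k:ℝ) * T₀ ≤ T := by
    rw [← le_div_iff₀ h0]
    exact Nat.floor_le (by positivity)
  have hkT' : T - T₀ < (k:ℝ) * T₀ := by
    have h1 : T / T₀ < (k:ℝ) + 1 := Nat.lt_floor_add_one _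
    rw [div_lt_iff₀ h0] at h1
    nlinarith
  set μ₀ : ℝ := T * ρ / k with hμ₀
  have hμ₀pos : 0 < μ₀ := div_pos (mul_pos hT hρ.1.1) hkpos
  have htop : RCmax A b T₀ μ₀ = ⊤ := by
    rw [eq_top_iff]
    calc (⊤ : EReal) = RCmax A b T (T * ρ) := hρ.2.symm
      _ ≤ RCmax A b ((k:ℝ) * T₀) (T * ρ) := rcmax_window A b hkT
      _ = RCmax A b ((k:ℝ) * T₀) ((k:ℝ) * μ₀) := by
          rw [show (k:ℝ) * μ₀ = T * ρ by rw [hμ₀]; field_simp]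
      _ ≤ RCmax A b T₀ μ₀ := rcmax_split A b h0.le k
  by_cases hcase : μ₀ ≤ T₀
  · set ρ' : ℝ := μ₀ / T₀ with hρ'
    have hρ'mem : ρ' ∈ Sset A b T₀ := by
      refine ⟨⟨div_pos hμ₀pos h0, ?_⟩, ?_⟩
      · rw [div_le_one h0]; exact hcase
      · rw [show T₀ * ρ' = μ₀ by rw [hρ']; field_simp]
        exact htop
    have hle : rhoCrit A b T₀ ≤ ρ' := csInf_le (Sset_bddBelow A b) hρ'mem
    have hρeq : ρ' * ((k:ℝ) * T₀ / T) = ρ := by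
      rw [hρ', hμ₀]; field_simp; try ring
    have hρ'nonneg : 0 ≤ ρ' := (div_pos hμ₀pos h0).le
    calc rhoCrit A b T₀ * ((T - T₀) / T) ≤ ρ' * ((T - T₀) / T) :=
          mul_le_mul_of_nonneg_right hle (div_nonneg (by linarith) hT.le)
      _ ≤ ρ' * ((k:ℝ) * T₀ / T) :=
          mul_le_mul_of_nonneg_left ((div_le_div_iff_of_pos_right hT).2 hkT'.le) hρ'nonneg
      _ = ρ := hρeq
  · push_neg at hcase
    have hρexpr : (k:ℝ) * μ₀ / T = ρ := by rw [hμ₀]; field_simp; try ring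
    have h1 : (T - T₀) / T ≤ ρ := by
      rw [← hρexpr]
      apply (div_le_div_iff_of_pos_right hT).2
      nlinarith
    calc rhoCrit A b T₀ * ((T - T₀) / T) ≤ 1 * ((T - T₀) / T) :=
          mul_le_mul_of_nonneg_right (rhoCrit_le_one A b hn hctrl h0)
            (div_nonneg (by linarith) hT.le)
      _ = (T - T₀) / T := one_mul _
      _ ≤ ρ := h1

lemma rhoCrit_lower (hn : 0 < n) (hctrl : IsControllable A b) {T₀ T : ℝ}
    (h0 : 0 < T₀) (hTT : T₀ < T) :
    rhoCrit A b T₀ * ((T - T₀) / T) ≤ rhoCrit A b T :=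
  le_csInf ⟨1, one_mem_Sset A b hn hctrl (h0.trans hTT)⟩
    (fun ρ hρ => mem_Sset_lower A b hn hctrl h0 hTT hρ)

lemma rhoCrit_upper (hn : 0 < n) (hctrl : IsControllable A b) {T₀ T ρ'' : ℝ}
    (h0 : 0 < T₀) (hT : 0 < T) (hTT : T < T₀) (hρ'' : ρ'' ∈ Sset A b T₀)
    (hsmall : T ≤ T₀ * (1 - ρ'')) :
    rhoCrit A b T ≤ ρ'' * (T₀ / (T₀ - T)) := by
  set k : ℕ := ⌊T₀ / T⌋₊ with hk
  have hk1 : 1 ≤ k := Nat.le_floor (by rw [Nat.cast_one, le_div_iff₀ hT, one_mul]; linarith)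
  have hkpos : (0:ℝ) < k := by exact_mod_cast Nat.lt_of_lt_of_le Nat.zero_lt_one hk1
  have hkT : (k:ℝ) * T ≤ T₀ := by
    rw [← le_div_iff₀ hT]
    exact Nat.floor_le (by positivity)
  have hkT' : T₀ - T < (k:ℝ) * T := by
    have h1 : T₀ / T < (k:ℝ) + 1 := Nat.lt_floor_add_one _
    rw [div_lt_iff₀ hT] at h1
    nlinarith
  set μ : ℝ := T₀ * ρ'' / k with hμ
  have hμpos : 0 < μ := div_pos (mul_pos h0 hρ''.1.1) hkpos
  have htop : RCmax A b T μ = ⊤ := by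
    rw [eq_top_iff]
    calc (⊤ : EReal) = RCmax A b T₀ (T₀ * ρ'') := hρ''.2.symm
      _ ≤ RCmax A b ((k:ℝ) * T) (T₀ * ρ'') := rcmax_window A b hkT
      _ = RCmax A b ((k:ℝ) * T) ((k:ℝ) * μ) := by
          rw [show (k:ℝ) * μ = T₀ * ρ'' by rw [hμ]; field_simp]
      _ ≤ RCmax A b T μ := rcmax_split A b hT.le k
  set ρ : ℝ := μ / T with hρdef
  have hT₀T : 0 < T₀ - T := by linarith
  have hρle : ρ ≤ ρ'' * (T₀ / (T₀ - T)) := by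
    rw [hρdef, hμ]
    rw [div_div]
    rw [show ρ'' * (T₀ / (T₀ - T)) = T₀ * ρ'' / (T₀ - T) by ring]
    apply div_le_div_of_nonneg_left (mul_nonneg h0.le hρ''.1.1.le) hT₀T
    nlinarith
  have hρ1 : ρ ≤ 1 := by
    have h2 : ρ'' * (T₀ / (T₀ - T)) ≤ 1 := by
      rw [show ρ'' * (T₀ / (T₀ - T)) = T₀ * ρ'' / (T₀ - T) by ring, div_le_one hT₀T]
      nlinarith
    linarith [hρle]
  have hρmem : ρ ∈ Sset A b T := by
    refine ⟨⟨div_pos hμpos hT, hρ1⟩, ?_⟩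
    rw [show T * ρ = μ by rw [hρdef]; field_simp]
    exact htop
  exact le_trans (csInf_le (Sset_bddBelow A b) hρmem) hρle

end RhoCrit

/-- Lemma 3(ii): for a controllable pair `(A,b)`, `lim_{T→+∞} ρ(A,T)` exists and equals
`sup_{T>0} ρ(A,T)`, and `lim_{T→0⁺} ρ(A,T)` exists and equals `inf_{T>0} ρ(A,T)`. -/
theorem rhoCrit_limits (n : ℕ) (hn : 0 < n)
    (A : Matrix (Fin n) (Fin n) ℝ) (b : Fin n → ℝ) (hctrl : IsControllable A b) :
    Tendsto (fun T => rhoCrit A b T) atTop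
      (nhds (sSup ((fun T => rhoCrit A b T) '' Set.Ioi (0:ℝ)))) ∧
    Tendsto (fun T => rhoCrit A b T) (nhdsWithin (0:ℝ) (Set.Ioi (0:ℝ)))
      (nhds (sInf ((fun T => rhoCrit A b T) '' Set.Ioi (0:ℝ)))) := by
  have himg_ne : ((fun T => rhoCrit A b T) '' Set.Ioi (0:ℝ)).Nonempty :=
    ⟨rhoCrit A b 1, 1, Set.mem_Ioi.2 one_pos, rfl⟩
  have hbdd_above : BddAbove ((fun T => rhoCrit A b T) '' Set.Ioi (0:ℝ)) := by
    refine ⟨1, ?_⟩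
    rintro y ⟨T, hT, rfl⟩
    exact rhoCrit_le_one A b hn hctrl hT
  have hbdd_below : BddBelow ((fun T => rhoCrit A b T) '' Set.Ioi (0:ℝ)) := by
    refine ⟨0, ?_⟩
    rintro y ⟨T, hT, rfl⟩
    exact rhoCrit_nonneg A b hn hctrl hT
  set L : ℝ := sSup ((fun T => rhoCrit A b T) '' Set.Ioi (0:ℝ)) with hL
  set l : ℝ := sInf ((fun T => rhoCrit A b T) '' Set.Ioi (0:ℝ)) with hl
  have hrle : ∀ T : ℝ, 0 < T → rhoCrit A b T ≤ L :=
    fun T hT => le_csSup hbdd_above ⟨T, hT, rfl⟩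
  have hrge : ∀ T : ℝ, 0 < T → l ≤ rhoCrit A b T :=
    fun T hT => csInf_le hbdd_below ⟨T, hT, rfl⟩
  constructor
  · rw [Metric.tendsto_atTop]
    intro ε hε
    obtain ⟨y, hy_mem, hy⟩ := exists_lt_of_lt_csSup himg_ne (show L - ε/2 < L by linarith)
    obtain ⟨T₀, hT₀pos, rfl⟩ := hy_mem
    simp only [Set.mem_Ioi] at hT₀pos
    refine ⟨max (T₀ + 1) (2 * T₀ / ε), fun T hT => ?_⟩
    have hT1 : T₀ + 1 ≤ T := le_trans (le_max_left _ _) hT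
    have hT2 : 2 * T₀ / ε ≤ T := le_trans (le_max_right _ _) hT
    have hTpos : 0 < T := by linarith
    have hTT : T₀ < T := by linarith
    have hlow : rhoCrit A b T₀ * ((T - T₀) / T) ≤ rhoCrit A b T :=
      rhoCrit_lower A b hn hctrl hT₀pos hTT
    have hfrac : T₀ / T ≤ ε / 2 := by
      rw [div_le_iff₀ hε] at hT2
      rw [div_le_iff₀ hTpos]
      linarith
    have hr0 : 0 ≤ rhoCrit A b T₀ := rhoCrit_nonneg A b hn hctrl hT₀pos
    have hr1 : rhoCrit A b T₀ ≤ 1 := rhoCrit_le_one A b hn hctrl hT₀pos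
    have hexp : rhoCrit A b T₀ * ((T - T₀) / T)
        = rhoCrit A b T₀ - rhoCrit A b T₀ * (T₀ / T) := by
      field_simp
      try ring
    have h2 : rhoCrit A b T₀ * (T₀ / T) ≤ T₀ / T :=
      mul_le_of_le_one_left (div_nonneg hT₀pos.le hTpos.le) hr1
    have key : rhoCrit A b T₀ - ε / 2 ≤ rhoCrit A b T := by
      rw [hexp] at hlow
      linarith
    have hub := hrle T hTpos
    rw [Real.dist_eq]
    apply abs_lt.2
    constructor <;> [linarith; linarith]
  · rw [Metric.tendsto_nhdsWithin_nhds]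
    intro ε hε
    obtain ⟨y, hy_mem, hy⟩ := exists_lt_of_csInf_lt himg_ne (show l < l + ε/4 by linarith)
    obtain ⟨T₀, hT₀pos, rfl⟩ := hy_mem
    simp only [Set.mem_Ioi] at hT₀pos
    have hSne : (Sset A b T₀).Nonempty := ⟨1, one_mem_Sset A b hn hctrl hT₀pos⟩
    obtain ⟨ρ'', hρ''mem, hρ''lt⟩ := exists_lt_of_csInf_lt hSne
      (show sInf (Sset A b T₀) < rhoCrit A b T₀ + ε/4 by
        rw [← rhoCrit_eq_sInf_Sset]; linarith)
    have hρ''le1 : ρ'' ≤ 1 := hρ''mem.1.2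
    have hρ''pos : 0 < ρ'' := hρ''mem.1.1
    by_cases hρcase : ρ'' < 1
    · refine ⟨min (T₀ * (1 - ρ'')) (min (T₀/2) (ε * T₀ / 8)), ?_, ?_⟩
      · apply lt_min (by nlinarith) (lt_min (by linarith) (by positivity))
      intro T hTmem hdist
      have hTpos : 0 < T := hTmem
      rw [Real.dist_eq, sub_zero] at hdist
      have hTδ : T < min (T₀ * (1 - ρ'')) (min (T₀/2) (ε * T₀ / 8)) :=
        lt_of_le_of_lt (le_abs_self T) hdist
      have h1 : T ≤ T₀ * (1 - ρ'') := le_trans hTδ.le (min_le_left _ _)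
      have h2 : T ≤ T₀ / 2 := le_trans hTδ.le (le_trans (min_le_right _ _) (min_le_left _ _))
      have h3 : T ≤ ε * T₀ / 8 := le_trans hTδ.le (le_trans (min_le_right _ _) (min_le_right _ _))
      have hTT : T < T₀ := by linarith
      have hT₀T : 0 < T₀ - T := by linarith
      have hup := rhoCrit_upper A b hn hctrl hT₀pos hTpos hTT hρ''mem h1
      have hb1 : T₀ / (T₀ - T) ≤ 1 + ε/4 := by
        rw [div_le_iff₀ hT₀T]
        have h4 : (ε/4) * T ≤ (ε/4) * (T₀/2) :=
          mul_le_mul_of_nonneg_left h2 (by linarith)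
        nlinarith
      have hfin : rhoCrit A b T ≤ ρ'' + ε/4 := by
        calc rhoCrit A b T ≤ ρ'' * (T₀ / (T₀ - T)) := hup
          _ ≤ ρ'' * (1 + ε/4) := mul_le_mul_of_nonneg_left hb1 hρ''pos.le
          _ = ρ'' + ρ'' * (ε/4) := by ring
          _ ≤ ρ'' + ε/4 := by nlinarith
      have hge := hrge T hTpos
      rw [Real.dist_eq]
      apply abs_lt.2
      constructor
      · linarith
      · linarith
    · push_neg at hρcase
      have hρeq : ρ'' = 1 := le_antisymm hρ''le1 hρcase
      have hl1 : 1 - ε/2 < l := by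
        rw [hρeq] at hρ''lt
        linarith
      refine ⟨1, one_pos, ?_⟩
      intro T hTmem _
      have hTpos : 0 < T := hTmem
      have h1 : rhoCrit A b T ≤ 1 := rhoCrit_le_one A b hn hctrl hTpos
      have h2 : l ≤ rhoCrit A b T := hrge T hTpos
      rw [Real.dist_eq]
      apply abs_lt.2
      constructor
      · linarith
      · linarith


end
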